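/- Let S be a common independent set of two matroids such that every (s,t)-path in the exchange graph G(S) has length at least 6. Then |S| ≥ (2/3)·r, where r is the maximum size of a common independent set. -/

import Mathlib

open Set

variable {α : Type*}

/-- An independent set contained in the closure of an independent set has no larger
cardinality. -/
lemma indep_encard_le_of_subset_closure {M : Matroid α} {X Y : Set α}
    (hX : M.Indep X) (hY : M.Indep Y) (hXY : X ⊆ M.closure Y) : X.encard ≤ Y.encard := by
  obtain ⟨J, hJ, hXJ⟩ := hX.subset_isBasis_of_subset hXY (M.closure_subset_ground Y)
  calc X.encard ≤ J.encard := Set.encard_le_encard hXJ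
    _ = Y.encard := hJ.encard_eq_encard hY.isBasis_closure

/-- If `insert v S` is dependent with `S` independent and finite, then `v` lies in the closure
of the set of elements `u` of `S` for which the exchange `S - u + v` is independent. -/
lemma mem_closure_exchange_set {M : Matroid α} {S : Set α} (hS : M.Indep S) (hfin : S.Finite)
    {v : α} (hv : v ∈ M.E) (hdep : ¬ M.Indep (insert v S)) :
    v ∈ M.closure {u | u ∈ S ∧ M.Indep (insert v (S \ {u}))} := by
  have hvS : v ∉ S := fun h => hdep (by rwa [insert_eq_of_mem h])
  have hP : ∃ n, ∃ C, C ⊆ S ∧ v ∈ M.closure C ∧ C.ncard = n := by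
    refine ⟨S.ncard, S, Subset.rfl, ?_, rfl⟩
    rw [hS.mem_closure_iff_of_notMem hvS, Matroid.dep_iff]
    exact ⟨hdep, insert_subset hv hS.subset_ground⟩
  classical
  obtain ⟨C, hCS, hvC, hCcard⟩ := Nat.find_spec hP
  have hCfin : C.Finite := hfin.subset hCS
  have hmin : ∀ u ∈ C, v ∉ M.closure (C \ {u}) := by
    intro u hu hcon
    have hlt : (C \ {u}).ncard < Nat.find hP := by
      rw [← hCcard]
      exact Set.ncard_diff_singleton_lt_of_mem hu hCfin
    exact Nat.find_min hP hlt ⟨C \ {u}, (diff_subset).trans hCS, hcon, rfl⟩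
  have hCW : C ⊆ {u | u ∈ S ∧ M.Indep (insert v (S \ {u}))} := by
    intro u hu
    refine ⟨hCS hu, ?_⟩
    by_contra hcon
    -- then v ∈ closure (S \ {u})
    have hSu : M.Indep (S \ {u}) := hS.subset diff_subset
    have hvSu : v ∈ M.closure (S \ {u}) := by
      rw [hSu.mem_closure_iff_of_notMem (fun h => hvS h.1), Matroid.dep_iff]
      exact ⟨hcon, insert_subset hv (diff_subset.trans hS.subset_ground)⟩
    -- exchange : u ∈ closure (insert v (C \ {u}))
    have hex : u ∈ M.closure (insert v (C \ {u})) \ M.closure (C \ {u}) := by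
      refine Matroid.closure_exchange ⟨?_, hmin u hu⟩
      rwa [insert_diff_singleton, insert_eq_of_mem hu]
    have hsub : insert v (C \ {u}) ⊆ M.closure (S \ {u}) :=
      insert_subset hvSu ((diff_subset_diff_left hCS).trans
        (M.subset_closure (S \ {u}) (diff_subset.trans hS.subset_ground)))
    have : u ∈ M.closure (S \ {u}) :=
      M.closure_subset_closure_of_subset_closure hsub hex.1
    exact hS.notMem_closure_sdiff_of_mem (hCS hu) this
  exact M.closure_subset_closure hCW hvC

/-- Vertices of the exchange graph: `Sum.inl v` is an element of the ground set,
`Sum.inr false` is the source `s`, `Sum.inr true` is the sink `t`. -/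
abbrev ExV (α : Type*) := α ⊕ Bool

/-- Adjacency in the exchange graph `G(S)` of the common independent set `S`. -/
def exAdj (M₁ M₂ : Matroid α) (S : Set α) : ExV α → ExV α → Prop
  | Sum.inl u, Sum.inl v =>
      (u ∈ S ∧ v ∉ S ∧ M₁.Indep (insert v (S \ {u}))) ∨
      (u ∉ S ∧ v ∈ S ∧ M₂.Indep (insert u (S \ {v})))
  | Sum.inr false, Sum.inl v => v ∉ S ∧ M₁.Indep (insert v S)
  | Sum.inl v, Sum.inr true => v ∉ S ∧ M₂.Indep (insert v S)
  | _, _ => False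

/-- `l` is an `(s,t)`-path (list of vertices) in the exchange graph `G(S)`.
Its length (number of edges) is `l.length - 1`. -/
def IsSTPath (M₁ M₂ : Matroid α) (S : Set α) (l : List (ExV α)) : Prop :=
  l.Chain' (exAdj M₁ M₂ S) ∧ l.head? = some (Sum.inr false) ∧
    l.getLast? = some (Sum.inr true)

/-- `l` is a path from `s` to the element `v` in the exchange graph `G(S)`. -/
def IsSPathTo (M₁ M₂ : Matroid α) (S : Set α) (v : α) (l : List (ExV α)) : Prop :=
  l.Chain' (exAdj M₁ M₂ S) ∧ l.head? = some (Sum.inr false) ∧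
    l.getLast? = some (Sum.inl v)

/-- `v` is at distance exactly `i` from `s` in the exchange graph `G(S)`;
i.e. `v ∈ D_i`. -/
def InLayer (M₁ M₂ : Matroid α) (S : Set α) (i : ℕ) (v : α) : Prop :=
  (∃ l, IsSPathTo M₁ M₂ S v l ∧ l.length = i + 1) ∧
    ∀ l, IsSPathTo M₁ M₂ S v l → i + 1 ≤ l.length

/-- Shortest `(s,t)`-paths in `G(S)` have length exactly `4`. -/
def ShortestAugLenFour (M₁ M₂ : Matroid α) (S : Set α) : Prop :=
  (∃ l, IsSTPath M₁ M₂ S l ∧ l.length = 5) ∧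
    ∀ l, IsSTPath M₁ M₂ S l → 5 ≤ l.length

/-- `(B₁, A₁, B₂)` is an augmenting set in `G(S)`. -/
def IsAugSet (M₁ M₂ : Matroid α) (S B₁ A₁ B₂ : Set α) : Prop :=
  (∀ v ∈ B₁, InLayer M₁ M₂ S 1 v) ∧ (∀ v ∈ A₁, InLayer M₁ M₂ S 2 v) ∧
  (∀ v ∈ B₂, InLayer M₁ M₂ S 3 v) ∧
  B₁.ncard = A₁.ncard ∧ A₁.ncard = B₂.ncard ∧
  M₁.Indep (S ∪ B₁) ∧ M₂.Indep ((S ∪ B₁) \ A₁) ∧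
  M₁.Indep ((S \ A₁) ∪ B₂) ∧ M₂.Indep (S ∪ B₂)

/-- If every `(s,t)`-path in the exchange graph `G(S)` has length at least `6`,
then `S` is a `2/3`-approximate solution of matroid intersection. -/
theorem two_thirds_of_no_short_path {α : Type*} (M₁ M₂ : Matroid α)
    (hE : M₂.E = M₁.E) (hfin : M₁.E.Finite)
    (S : Set α) (hS₁ : M₁.Indep S) (hS₂ : M₂.Indep S)
    (r : ℕ) (hr : IsGreatest {n | ∃ T, M₁.Indep T ∧ M₂.Indep T ∧ T.ncard = n} r)
    (hlong : ∀ l : List (ExV α), IsSTPath M₁ M₂ S l → 7 ≤ l.length) :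
    (2 / 3 : ℚ) * r ≤ S.ncard := by
  classical
  obtain ⟨⟨T, hT₁, hT₂, hTcard⟩, -⟩ := hr
  have hSfin : S.Finite := hfin.subset hS₁.subset_ground
  have hTfin : T.Finite := hfin.subset hT₁.subset_ground
  set D1 : Set α := {v | v ∉ S ∧ M₁.Indep (insert v S)} with hD1def
  set L2 : Set α := {u | u ∈ S ∧ ∃ v ∈ D1, M₂.Indep (insert v (S \ {u}))} with hL2def
  set D3 : Set α := {v | v ∉ S ∧ (M₁.Indep (insert v S) ∨
    ∃ u ∈ L2, M₁.Indep (insert v (S \ {u})))} with hD3def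
  set L4 : Set α := {u | u ∈ S ∧ ∃ v ∈ D3, M₂.Indep (insert v (S \ {u}))} with hL4def
  have hL2S : L2 ⊆ S := fun u hu => hu.1
  have hL4S : L4 ⊆ S := fun u hu => hu.1
  have hL24 : L2 ⊆ L4 := by
    rintro u ⟨huS, v, ⟨hvS, hvI⟩, hvu⟩
    exact ⟨huS, v, ⟨hvS, Or.inl hvI⟩, hvu⟩
  -- key : no element at distance ≤ 3 from `s` has an edge into `t`
  have key : ∀ v ∈ D3, ¬ M₂.Indep (insert v S) := by
    rintro v ⟨hvS, hcase⟩ hcon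
    rcases hcase with h1 | ⟨u, ⟨huS, v1, ⟨hv1S, hv1I⟩, hv1u⟩, hvu⟩
    · have h7 := hlong [Sum.inr false, Sum.inl v, Sum.inr true] ⟨?_, rfl, rfl⟩
      · norm_num at h7
      · refine List.isChain_cons_cons.2 ⟨⟨hvS, h1⟩, ?_⟩
        exact List.isChain_cons_cons.2 ⟨⟨hvS, hcon⟩, List.isChain_singleton _⟩
    · have h7 := hlong [Sum.inr false, Sum.inl v1, Sum.inl u, Sum.inl v, Sum.inr true]
        ⟨?_, rfl, rfl⟩
      · norm_num at h7
      · refine List.isChain_cons_cons.2 ⟨⟨hv1S, hv1I⟩, ?_⟩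
        refine List.isChain_cons_cons.2 ⟨Or.inr ⟨hv1S, huS, hv1u⟩, ?_⟩
        refine List.isChain_cons_cons.2 ⟨Or.inl ⟨huS, hvS, hvu⟩, ?_⟩
        exact List.isChain_cons_cons.2 ⟨⟨hvS, hcon⟩, List.isChain_singleton _⟩
  -- first cut : |T| ≤ |S| + |L2|
  have hA : T.encard ≤ S.encard + L2.encard := by
    have hX : (T \ D1) ⊆ M₁.closure S := by
      rintro x ⟨hxT, hxD1⟩
      by_cases hxS : x ∈ S
      · exact M₁.subset_closure S hS₁.subset_ground hxS
      · have hdep : ¬ M₁.Indep (insert x S) := fun h => hxD1 ⟨hxS, h⟩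
        rw [hS₁.mem_closure_iff_of_notMem hxS, Matroid.dep_iff]
        exact ⟨hdep, insert_subset (hT₁.subset_ground hxT) hS₁.subset_ground⟩
    have hY : (T ∩ D1) ⊆ M₂.closure L2 := by
      rintro y ⟨hyT, hyD1⟩
      have h2 : ¬ M₂.Indep (insert y S) := key y ⟨hyD1.1, Or.inl hyD1.2⟩
      have hmem := mem_closure_exchange_set hS₂ hSfin (hT₂.subset_ground hyT) h2
      refine M₂.closure_subset_closure ?_ hmem
      rintro u ⟨huS, huI⟩
      exact ⟨huS, y, hyD1, huI⟩
    calc T.encard = (T \ D1).encard + (T ∩ D1).encard :=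
          (Set.encard_diff_add_encard_inter T D1).symm
      _ ≤ S.encard + L2.encard := add_le_add
          (indep_encard_le_of_subset_closure (hT₁.subset diff_subset) hS₁ hX)
          (indep_encard_le_of_subset_closure (hT₂.subset inter_subset_left)
            (hS₂.subset hL2S) hY)
  -- second cut : |T| ≤ |S \ L2| + |L4|
  have hB : T.encard ≤ (S \ L2).encard + L4.encard := by
    have hX : (T \ (L4 ∪ D3)) ⊆ M₁.closure (S \ L2) := by
      rintro x ⟨hxT, hxN⟩
      have hxL4 : x ∉ L4 := fun h => hxN (Or.inl h)
      have hxD3 : x ∉ D3 := fun h => hxN (Or.inr h)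
      by_cases hxS : x ∈ S
      · exact M₁.subset_closure _ (diff_subset.trans hS₁.subset_ground)
          ⟨hxS, fun h => hxL4 (hL24 h)⟩
      · have hdep : ¬ M₁.Indep (insert x S) := fun h => hxD3 ⟨hxS, Or.inl h⟩
        have hmem := mem_closure_exchange_set hS₁ hSfin (hT₁.subset_ground hxT) hdep
        refine M₁.closure_subset_closure ?_ hmem
        rintro u ⟨huS, huI⟩
        exact ⟨huS, fun huL2 => hxD3 ⟨hxS, Or.inr ⟨u, huL2, huI⟩⟩⟩
    have hY : (T ∩ (L4 ∪ D3)) ⊆ M₂.closure L4 := by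
      rintro y ⟨hyT, hy⟩
      rcases hy with hy | hy
      · exact M₂.subset_closure L4 (hL4S.trans hS₂.subset_ground) hy
      · have h2 : ¬ M₂.Indep (insert y S) := key y hy
        have hmem := mem_closure_exchange_set hS₂ hSfin (hT₂.subset_ground hyT) h2
        refine M₂.closure_subset_closure ?_ hmem
        rintro u ⟨huS, huI⟩
        exact ⟨huS, y, hy, huI⟩
    calc T.encard = (T \ (L4 ∪ D3)).encard + (T ∩ (L4 ∪ D3)).encard :=
          (Set.encard_diff_add_encard_inter T (L4 ∪ D3)).symm
      _ ≤ (S \ L2).encard + L4.encard := add_le_add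
          (indep_encard_le_of_subset_closure (hT₁.subset diff_subset)
            (hS₁.subset diff_subset) hX)
          (indep_encard_le_of_subset_closure (hT₂.subset inter_subset_left)
            (hS₂.subset hL4S) hY)
  -- combine the two cuts
  have hsum : 2 * T.encard ≤ 3 * S.encard := by
    have h3 : (S \ L2).encard + L2.encard = S.encard :=
      Set.encard_diff_add_encard_of_subset hL2S
    have h4 : L4.encard ≤ S.encard := Set.encard_le_encard hL4S
    calc 2 * T.encard = T.encard + T.encard := two_mul _
      _ ≤ (S.encard + L2.encard) + ((S \ L2).encard + L4.encard) := add_le_add hA hB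
      _ = (S.encard + ((S \ L2).encard + L2.encard)) + L4.encard := by ring
      _ = (S.encard + S.encard) + L4.encard := by rw [h3]
      _ ≤ (S.encard + S.encard) + S.encard := add_le_add le_rfl h4
      _ = 3 * S.encard := by ring
  have hnat : 2 * r ≤ 3 * S.ncard := by
    rw [← hTfin.cast_ncard_eq, ← hSfin.cast_ncard_eq, hTcard] at hsum
    exact_mod_cast hsum
  rw [div_mul_eq_mul_div, div_le_iff₀ (by norm_num : (0:ℚ) < 3)]
  calc (2:ℚ) * r = ((2 * r : ℕ) : ℚ) := by push_cast; ring
    _ ≤ ((3 * S.ncard : ℕ) : ℚ) := by exact_mod_cast hnat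
    _ = (S.ncard : ℚ) * 3 := by push_cast; ring
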